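/- Let x, y be non-antipodal points on S^3 ⊂ R^4 and let V be tangent to S^3 at x. Then the triple product satisfies [y, P_{yx}V, y cos(alpha) - x] = [y, V, -x], where alpha is the spherical distance between x and y and P_{yx} is parallel transport. -/

import Mathlib

open scoped RealInnerProductSpace

noncomputable section

abbrev E4 := EuclideanSpace ℝ (Fin 4)

/-- The triple product `[A,B,C]` in `ℝ⁴`: the vector whose `i`-th component is the
determinant of the matrix with rows `A, B, C, eᵢ`; equivalently the unique vector with
`⟪[A,B,C], X⟫ = det (A,B,C,X)` for all `X`. -/
def trip (A B C : E4) : E4 :=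
  WithLp.toLp 2 (fun i => Matrix.det (Matrix.of ![(A : Fin 4 → ℝ), (B : Fin 4 → ℝ), (C : Fin 4 → ℝ), Pi.single i 1]))

/-- Parallel transport along the minimal geodesic of `S³` from `x` to `y` of a tangent
vector `V` at `x`. -/
def Ptrans (x y V : E4) : E4 := V - (⟪V, y⟫ / (1 + ⟪x, y⟫)) • (x + y)

lemma det4 (a b c d : Fin 4 → ℝ) : (Matrix.of ![a,b,c,d]).det =
    a 0*(b 1*(c 2*d 3 - c 3*d 2) - b 2*(c 1*d 3 - c 3*d 1) + b 3*(c 1*d 2 - c 2*d 1))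
  - a 1*(b 0*(c 2*d 3 - c 3*d 2) - b 2*(c 0*d 3 - c 3*d 0) + b 3*(c 0*d 2 - c 2*d 0))
  + a 2*(b 0*(c 1*d 3 - c 3*d 1) - b 1*(c 0*d 3 - c 3*d 0) + b 3*(c 0*d 1 - c 1*d 0))
  - a 3*(b 0*(c 1*d 2 - c 2*d 1) - b 1*(c 0*d 2 - c 2*d 0) + b 2*(c 0*d 1 - c 1*d 0)) := by
  simp [Matrix.det_succ_row_zero, Fin.sum_univ_succ]
  norm_num [Fin.succAbove, Fin.lt_def,
    show (Fin.succ 2 : Fin 4) = 3 from rfl, show (Fin.castSucc 2 : Fin 4) = 2 from rfl]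
  ring

set_option maxHeartbeats 1600000 in
/-- For non-antipodal `x, y ∈ S³` and `V` tangent at `x`, with `α = arccos⟪x,y⟫`,
the triple product satisfies `[y, P_{yx}V, y cos α - x] = [y, V, -x]`. -/
theorem trip_ptrans (x y V : E4) (hx : ‖x‖ = 1) (hy : ‖y‖ = 1)
    (hxy : ⟪x, y⟫ ≠ -1) (hV : ⟪V, x⟫ = 0) :
    trip y (Ptrans x y V) (Real.cos (Real.arccos ⟪x, y⟫) • y - x) = trip y V (-x) := by
  have habs : |⟪x, y⟫| ≤ 1 := by
    have := abs_real_inner_le_norm x y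
    rw [hx, hy] at this; simpa using this
  have hcos : Real.cos (Real.arccos ⟪x, y⟫) = ⟪x, y⟫ :=
    Real.cos_arccos (by linarith [abs_le.mp habs |>.1]) (by linarith [abs_le.mp habs |>.2])
  rw [hcos]
  set c : ℝ := ⟪V, y⟫ / (1 + ⟪x, y⟫) with hc
  ext i
  simp only [trip, Ptrans, det4, PiLp.toLp_apply]
  have hxy4 : ⟪x, y⟫ = x 0 * y 0 + x 1 * y 1 + x 2 * y 2 + x 3 * y 3 := by
    simp [PiLp.inner_apply, Fin.sum_univ_four, mul_comm]
  fin_cases i <;>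
    · simp only [PiLp.sub_apply, PiLp.add_apply, PiLp.smul_apply, PiLp.neg_apply,
        smul_eq_mul, hxy4]
      simp (config := { decide := true }) only [Pi.single_apply, if_true, if_false]
      norm_num
      ring
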